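/- For every fixed even integer k ≥ 2, as m → ∞, S^{(m)}((2m)^k) ∼ (2^k(2^k−1)/π^k)·ζ(k)·m^{k−1}. -/

import Mathlib

open Real Filter

def S (m x : ℕ) : ℤ :=
  ∑ n ∈ Finset.range x, if (2 * m + 1) ∣ n then (-1 : ℤ) ^ ((Nat.digits (2 * m) n).sum) else 0

-- digit sum step
lemma digitsum_step {B : ℕ} (hB : 2 ≤ B) (a b : ℕ) (ha : a < B) :
    ((Nat.digits B (a + B * b)).sum) = a + (Nat.digits B b).sum := by
  rcases Nat.eq_zero_or_pos (a + B * b) with h | h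
  · have ha0 : a = 0 := by omega
    have hb0 : b = 0 := by
      rcases Nat.eq_zero_or_pos b with h' | h'
      · exact h'
      · exfalso; nlinarith
    simp [ha0, hb0]
  · rw [Nat.digits_def' (by omega : 1 < B) h]
    have h1 : (a + B * b) % B = a := by
      rw [Nat.add_mul_mod_self_left]; exact Nat.mod_eq_of_lt ha
    have h2 : (a + B * b) / B = b := by
      rw [Nat.add_mul_div_left _ _ (by omega : 0 < B), Nat.div_eq_of_lt ha, Nat.zero_add]
    rw [h1, h2, List.sum_cons]

-- factorization of the signed generating sum
lemma gen_factor {B : ℕ} (hB : 2 ≤ B) : ∀ (k : ℕ) (z : ℂ),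
    ∑ n ∈ Finset.range (B ^ k), (-1 : ℂ) ^ ((Nat.digits B n).sum) * z ^ n =
      ∏ i ∈ Finset.range k, ∑ d ∈ Finset.range B, (-1 : ℂ) ^ d * (z ^ B ^ i) ^ d := by
  intro k
  induction k with
  | zero => intro z; simp
  | succ k ih =>
    intro z
    have hdecomp :
        ∑ p ∈ Finset.range B ×ˢ Finset.range (B ^ k),
            (-1 : ℂ) ^ ((Nat.digits B (p.1 + B * p.2)).sum) * z ^ (p.1 + B * p.2) =
          ∑ n ∈ Finset.range (B ^ (k + 1)), (-1 : ℂ) ^ ((Nat.digits B n).sum) * z ^ n := by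
      apply Finset.sum_nbij' (fun p => p.1 + B * p.2) (fun n => (n % B, n / B))
      · intro p hp
        simp only [Finset.mem_product, Finset.mem_range] at hp ⊢
        have hx : B * (p.2 + 1) = B * p.2 + B := by ring
        have h2' : p.2 + 1 ≤ B ^ k := hp.2
        have hle : B * (p.2 + 1) ≤ B * B ^ k := Nat.mul_le_mul le_rfl h2'
        rw [pow_succ']
        omega
      · intro n hn
        simp only [Finset.mem_range] at hn
        simp only [Finset.mem_product, Finset.mem_range]
        constructor
        · exact Nat.mod_lt _ (by omega)
        · rw [pow_succ'] at hn
          exact Nat.div_lt_of_lt_mul hn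
      · intro p hp
        simp only [Finset.mem_product, Finset.mem_range] at hp
        have h1 : (p.1 + B * p.2) % B = p.1 := by
          rw [Nat.add_mul_mod_self_left]; exact Nat.mod_eq_of_lt hp.1
        have h2 : (p.1 + B * p.2) / B = p.2 := by
          rw [Nat.add_mul_div_left _ _ (by omega : 0 < B), Nat.div_eq_of_lt hp.1, Nat.zero_add]
        simp [h1, h2]
      · intro n hn
        exact Nat.mod_add_div n B
      · intro p hp; rfl
    rw [← hdecomp, Finset.sum_product]
    have : ∀ p1 ∈ Finset.range B, ∀ p2 ∈ Finset.range (B ^ k),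
        (-1 : ℂ) ^ ((Nat.digits B (p1 + B * p2)).sum) * z ^ (p1 + B * p2) =
          ((-1 : ℂ) ^ p1 * z ^ p1) * ((-1 : ℂ) ^ ((Nat.digits B p2).sum) * (z ^ B) ^ p2) := by
      intro p1 hp1 p2 hp2
      rw [digitsum_step hB p1 p2 (Finset.mem_range.mp hp1)]
      rw [pow_add, pow_add, pow_mul]
      ring
    calc ∑ p1 ∈ Finset.range B, ∑ p2 ∈ Finset.range (B ^ k),
          (-1 : ℂ) ^ ((Nat.digits B (p1 + B * p2)).sum) * z ^ (p1 + B * p2)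
        = ∑ p1 ∈ Finset.range B, ∑ p2 ∈ Finset.range (B ^ k),
            ((-1 : ℂ) ^ p1 * z ^ p1) * ((-1 : ℂ) ^ ((Nat.digits B p2).sum) * (z ^ B) ^ p2) := by
          apply Finset.sum_congr rfl; intro p1 hp1
          apply Finset.sum_congr rfl; intro p2 hp2
          exact this p1 hp1 p2 hp2
      _ = (∑ d ∈ Finset.range B, (-1 : ℂ) ^ d * z ^ d) *
            ∑ n ∈ Finset.range (B ^ k), (-1 : ℂ) ^ ((Nat.digits B n).sum) * (z ^ B) ^ n := by
          rw [Finset.sum_mul_sum]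
      _ = ∏ i ∈ Finset.range (k + 1), ∑ d ∈ Finset.range B, (-1 : ℂ) ^ d * (z ^ B ^ i) ^ d := by
          rw [ih (z ^ B), Finset.prod_range_succ', mul_comm]
          congr 1
          · apply Finset.prod_congr rfl; intro i _
            have : (z ^ B) ^ B ^ i = z ^ B ^ (i + 1) := by
              rw [← pow_mul, ← pow_succ']
            rw [this]
          · simp

noncomputable def om (M : ℕ) : ℂ := Complex.exp (2 * Real.pi * Complex.I / M)

lemma om_pow_eq_one_iff {M : ℕ} (hM : 0 < M) (n : ℕ) : om M ^ n = 1 ↔ M ∣ n := by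
  have hM' : (M : ℂ) ≠ 0 := by exact_mod_cast hM.ne'
  have hpi : (2 * (Real.pi : ℂ) * Complex.I : ℂ) ≠ 0 := by
    simp [Real.pi_ne_zero, Complex.I_ne_zero]
  rw [om, ← Complex.exp_nat_mul, Complex.exp_eq_one_iff]
  constructor
  · rintro ⟨t, ht⟩
    have h2 : (n : ℂ) * (2 * (Real.pi : ℂ) * Complex.I) = (t : ℂ) * (2 * (Real.pi : ℂ) * Complex.I) * M := by
      field_simp at ht
      linear_combination (2 * (Real.pi : ℂ) * Complex.I) * ht
    have h3 : (n : ℂ) = (t : ℂ) * M := by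
      apply mul_right_cancel₀ hpi
      linear_combination h2
    have h4 : (n : ℤ) = t * M := by exact_mod_cast h3
    have h5 : (M : ℤ) ∣ (n : ℤ) := ⟨t, by rw [h4]; ring⟩
    exact_mod_cast h5
  · rintro ⟨c, rfl⟩
    refine ⟨c, ?_⟩
    field_simp
    push_cast
    ring

lemma roots_indicator {M : ℕ} (hM : 0 < M) (n : ℕ) :
    ∑ j ∈ Finset.range M, (om M ^ n) ^ j = if M ∣ n then (M : ℂ) else 0 := by
  by_cases h : M ∣ n
  · rw [if_pos h, (om_pow_eq_one_iff hM n).mpr h]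
    simp
  · rw [if_neg h, geom_sum_eq (fun hc => h ((om_pow_eq_one_iff hM n).mp hc)),
      ← pow_mul, mul_comm n M, pow_mul, (om_pow_eq_one_iff hM M).mpr dvd_rfl, one_pow]
    simp

lemma alt_prod (a b : ℂ) (r : ℕ) :
    ∏ i ∈ Finset.range (2 * r), (if Even i then a else b) = (a * b) ^ r := by
  induction r with
  | zero => simp
  | succ r ih =>
    have : 2 * (r + 1) = (2 * r + 1) + 1 := by ring
    rw [this, Finset.prod_range_succ, Finset.prod_range_succ, ih]
    have h1 : ¬ Even (2 * r + 1) := by simp [Nat.even_add_one]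
    have h2 : Even (2 * r) := even_two_mul r
    rw [if_neg h1, if_pos h2]
    ring

lemma pair_eval (u : ℂ) (x : ℝ) (hu0 : u ≠ 0) (hune : u ≠ -1)
    (hucos : u + u⁻¹ = 2 * (Real.cos (2 * x) : ℂ)) :
    ((u⁻¹ - 1) / (-u - 1)) * ((u - 1) / (-u⁻¹ - 1)) = ((Real.tan x : ℂ)) ^ 2 := by
  set c : ℝ := Real.cos (2 * x) with hc
  have hup1 : u + 1 ≠ 0 := fun h => hune (by linear_combination h)
  have hup1' : u⁻¹ + 1 ≠ 0 := by
    intro h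
    apply hup1
    have : u * (u⁻¹ + 1) = 1 + u := by field_simp
    rw [h, mul_zero] at this
    linear_combination -this
  have hden : (2 : ℂ) + u + u⁻¹ ≠ 0 := by
    intro h
    have h2 : (u + 1) ^ 2 = u * (2 + u + u⁻¹) := by field_simp; ring
    rw [h, mul_zero] at h2
    exact hup1 (pow_eq_zero_iff (two_ne_zero) |>.mp h2)
  have hcne : (1 : ℝ) + c ≠ 0 := by
    intro h
    apply hden
    have hcc : (c : ℂ) = -1 := by
      have : c = -1 := by linarith
      rw [this]; norm_num
    have h2 : u + u⁻¹ = -2 := by rw [hucos, hcc]; ring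
    linear_combination h2
  have hcos_sq : Real.cos x ^ 2 = (1 + c) / 2 := by rw [Real.cos_sq]; rw [hc]; ring
  have hsin_sq : Real.sin x ^ 2 = (1 - c) / 2 := by rw [Real.sin_sq, hcos_sq]; ring
  have hcosne : Real.cos x ≠ 0 := by
    intro h
    rw [h] at hcos_sq
    apply hcne
    norm_num at hcos_sq
    linarith
  have htan : Real.tan x ^ 2 = (1 - c) / (1 + c) := by
    rw [Real.tan_eq_sin_div_cos, div_pow, hsin_sq, hcos_sq]
    field_simp
  have hprod : ((u⁻¹ - 1) / (-u - 1)) * ((u - 1) / (-u⁻¹ - 1)) =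
      (2 - (u + u⁻¹)) / (2 + (u + u⁻¹)) := by
    have hnu : -u - 1 ≠ 0 := fun h => hup1 (by linear_combination -h)
    have hnu' : -u⁻¹ - 1 ≠ 0 := fun h => hup1' (by linear_combination -h)
    have hden' : (2 : ℂ) + (u + u⁻¹) ≠ 0 := fun h => hden (by linear_combination h)
    rw [div_mul_div_comm, div_eq_div_iff (by exact mul_ne_zero hnu hnu') hden']
    field_simp
    ring
  rw [hprod, hucos,
    show ((Real.tan x : ℂ)) ^ 2 = ((Real.tan x ^ 2 : ℝ) : ℂ) by push_cast; ring, htan]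
  have h2c : (2 : ℂ) + 2 * (c : ℂ) ≠ 0 := by
    intro h
    apply hcne
    have h2 := congrArg Complex.re h
    simp at h2
    linarith
  push_cast
  rw [div_eq_div_iff h2c (by exact_mod_cast fun h => hcne (by exact_mod_cast h))]
  ring

lemma main_identity (k m : ℕ) (hk : 2 ≤ k) (hke : Even k) (hm : 1 ≤ m) :
    ((2 * m + 1 : ℕ) : ℝ) * ((S m ((2 * m) ^ k) : ℤ) : ℝ) =
      ∑ j ∈ Finset.range (2 * m + 1), Real.tan (Real.pi * j / (2 * m + 1)) ^ k := by
  have hM0 : 0 < 2 * m + 1 := by omega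
  have hB : 2 ≤ 2 * m := by omega
  obtain ⟨r, hrr⟩ := hke
  have hr2 : k = 2 * r := by omega
  have hr1 : 1 ≤ r := by omega
  have hBev : Even (2 * m) := ⟨m, by ring⟩
  -- complex version
  have hC : ((2 * m + 1 : ℕ) : ℂ) * ((S m ((2 * m) ^ k) : ℤ) : ℂ) =
      ∑ j ∈ Finset.range (2 * m + 1), ((Real.tan (Real.pi * j / (2 * m + 1)) : ℂ)) ^ k := by
    have step1 : ((S m ((2 * m) ^ k) : ℤ) : ℂ) =
        ∑ n ∈ Finset.range ((2 * m) ^ k),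
          if (2 * m + 1) ∣ n then (-1 : ℂ) ^ ((Nat.digits (2 * m) n).sum) else 0 := by
      rw [S]
      push_cast [apply_ite (fun z : ℤ => (z : ℂ))]
      rfl
    rw [step1, Finset.mul_sum]
    have step2 : ∀ n, ((2 * m + 1 : ℕ) : ℂ) *
        (if (2 * m + 1) ∣ n then (-1 : ℂ) ^ ((Nat.digits (2 * m) n).sum) else 0) =
        (-1 : ℂ) ^ ((Nat.digits (2 * m) n).sum) *
          ∑ j ∈ Finset.range (2 * m + 1), ((om (2 * m + 1)) ^ j) ^ n := by
      intro n
      have : ∑ j ∈ Finset.range (2 * m + 1), ((om (2 * m + 1)) ^ j) ^ n =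
          if (2 * m + 1) ∣ n then ((2 * m + 1 : ℕ) : ℂ) else 0 := by
        rw [← roots_indicator hM0 n]
        apply Finset.sum_congr rfl
        intro j _
        rw [← pow_mul, ← pow_mul]
        congr 1
        ring
      rw [this]
      split_ifs <;> ring
    simp_rw [step2, Finset.mul_sum, Finset.sum_comm (s := Finset.range ((2*m)^k))]
    apply Finset.sum_congr rfl
    intro j hj
    rw [gen_factor hB k (om (2 * m + 1) ^ j)]
    -- facts about u
    set u : ℂ := om (2 * m + 1) ^ j with hu
    have hu0 : u ≠ 0 := pow_ne_zero _ (Complex.exp_ne_zero _)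
    have huM : u ^ (2 * m + 1) = 1 := by
      rw [hu, ← pow_mul, mul_comm j (2 * m + 1), pow_mul, (om_pow_eq_one_iff hM0 _).mpr dvd_rfl, one_pow]
    have huB : u ^ (2 * m) = u⁻¹ := by
      apply eq_inv_of_mul_eq_one_left
      rw [← pow_succ]
      exact huM
    have hune : u ≠ -1 := by
      intro h
      rw [h, Odd.neg_one_pow ⟨m, by omega⟩] at huM
      exact (by norm_num : (-1 : ℂ) ≠ 1) huM
    have huiB : (u⁻¹) ^ (2 * m) = u := by
      rw [inv_pow, huB, inv_inv]
    have huine : u⁻¹ ≠ -1 := by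
      intro h
      apply hune
      rw [← inv_inv u, h]
      norm_num
    have hpow : ∀ i, u ^ ((2 * m) ^ i) = if Even i then u else u⁻¹ := by
      intro i
      induction i with
      | zero => simp
      | succ i ih =>
        rw [pow_succ, pow_mul, ih]
        by_cases h : Even i
        · rw [if_pos h, if_neg (by simp [Nat.even_add_one, h]), huB]
        · rw [if_neg h, if_pos (by simp [Nat.even_add_one, h]), huiB]
    have geval : ∀ w : ℂ, w ≠ -1 →
        ∑ d ∈ Finset.range (2 * m), (-1 : ℂ) ^ d * w ^ d = (w ^ (2 * m) - 1) / (-w - 1) := by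
      intro w hw
      have h1 : ∀ d, (-1 : ℂ) ^ d * w ^ d = (-w) ^ d := by
        intro d; rw [← mul_pow, neg_one_mul]
      simp_rw [h1]
      rw [geom_sum_eq (fun hc => hw (by linear_combination -hc)), hBev.neg_pow]
    have hinner : ∀ i, (∑ d ∈ Finset.range (2 * m), (-1 : ℂ) ^ d * (u ^ (2 * m) ^ i) ^ d) =
        if Even i then (u⁻¹ - 1) / (-u - 1) else (u - 1) / (-u⁻¹ - 1) := by
      intro i
      rw [hpow i]
      by_cases h : Even i
      · rw [if_pos h, if_pos h, geval u hune, huB]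
      · rw [if_neg h, if_neg h, geval u⁻¹ huine, huiB]
    simp_rw [hinner]
    rw [hr2, alt_prod]
    -- pair evaluation
    have hucos : u + u⁻¹ = 2 * ((Real.cos (2 * (Real.pi * j / (2 * m + 1)))) : ℂ) := by
      have hu_exp : u = Complex.exp ((((2 * Real.pi * j / (2 * m + 1) : ℝ)) : ℂ) * Complex.I) := by
        rw [hu, om, ← Complex.exp_nat_mul]
        congr 1
        have hMne : ((2 * m + 1 : ℕ) : ℂ) ≠ 0 := by
          exact_mod_cast (by omega : (2 * m + 1 : ℕ) ≠ 0)
        push_cast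
        field_simp
      rw [hu_exp, ← Complex.exp_neg, Complex.ofReal_cos, Complex.two_cos]
      have : (2 * (Real.pi * j / (2 * m + 1)) : ℝ) = (2 * Real.pi * j / (2 * m + 1) : ℝ) := by
        ring
      rw [this, neg_mul]
    rw [pair_eval u (Real.pi * j / (2 * m + 1)) hu0 hune hucos, ← pow_mul]
  exact_mod_cast hC

-- summability lemmas
lemma hsummable {k : ℕ} (hk : 2 ≤ k) : Summable (fun n : ℕ => 1 / (n : ℝ) ^ k) :=
  summable_one_div_nat_pow.mpr (by omega)

lemma hodd_summable {k : ℕ} (hk : 2 ≤ k) :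
    Summable (fun l : ℕ => 1 / ((2 * l + 1 : ℕ) : ℝ) ^ k) :=
  (hsummable hk).comp_injective (fun a b hab => by omega)

lemma zeta_pnat_eq {k : ℕ} (hk : 2 ≤ k) :
    (∑' n : ℕ+, (1 : ℝ) / (n : ℝ) ^ k) = ∑' n : ℕ, 1 / (n : ℝ) ^ k := by
  rw [← Equiv.pnatEquivNat.symm.tsum_eq (fun n : ℕ+ => (1 : ℝ) / (n : ℝ) ^ k)]
  rw [(hsummable hk).tsum_eq_zero_add]
  have h0 : (1 : ℝ) / ((0 : ℕ) : ℝ) ^ k = 0 := by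
    rw [Nat.cast_zero, zero_pow (by omega), div_zero]
  rw [h0, zero_add]
  apply tsum_congr
  intro n
  have : ((Equiv.pnatEquivNat.symm n : ℕ+) : ℕ) = n + 1 := rfl
  norm_num [this]

lemma odd_sum_eq {k : ℕ} (hk : 2 ≤ k) :
    (∑' l : ℕ, 1 / ((2 * l + 1 : ℕ) : ℝ) ^ k) =
      (1 - (1 / 2) ^ k) * ∑' n : ℕ, 1 / (n : ℝ) ^ k := by
  have hf := hsummable hk
  have heq : ∀ l : ℕ, 1 / ((2 * l : ℕ) : ℝ) ^ k = (1 / 2) ^ k * (1 / (l : ℝ) ^ k) := by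
    intro l
    push_cast
    rw [mul_pow]
    rcases Nat.eq_zero_or_pos l with h | h
    · simp [h, zero_pow (show k ≠ 0 by omega)]
    · have : (l : ℝ) ≠ 0 := by positivity
      field_simp
      rw [← mul_pow]; norm_num
  have he : Summable (fun l : ℕ => 1 / ((2 * l : ℕ) : ℝ) ^ k) := by
    apply (hf.mul_left ((1 / 2 : ℝ) ^ k)).congr
    intro l
    rw [heq l]
  have ho := hodd_summable hk
  have h := tsum_even_add_odd (f := fun n : ℕ => 1 / (n : ℝ) ^ k)
    (he.congr (fun l => by push_cast; ring_nf)) (ho.congr (fun l => by push_cast; ring_nf))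
  have h2 : (∑' l : ℕ, 1 / ((2 * l : ℕ) : ℝ) ^ k) = (1 / 2) ^ k * ∑' n : ℕ, 1 / (n : ℝ) ^ k := by
    rw [← tsum_mul_left]
    exact tsum_congr heq
  have h3 : (∑' l : ℕ, (fun n : ℕ => 1 / (n : ℝ) ^ k) (2 * l)) =
      ∑' l : ℕ, 1 / ((2 * l : ℕ) : ℝ) ^ k := by push_cast; ring_nf
  have h4 : (∑' l : ℕ, (fun n : ℕ => 1 / (n : ℝ) ^ k) (2 * l + 1)) =
      ∑' l : ℕ, 1 / ((2 * l + 1 : ℕ) : ℝ) ^ k := by push_cast; ring_nf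
  rw [h3, h4, h2] at h
  linarith

lemma zeta_pos {k : ℕ} (hk : 2 ≤ k) : 0 < ∑' n : ℕ, 1 / (n : ℝ) ^ k := by
  apply (hsummable hk).tsum_pos (fun n => by positivity) 1
  norm_num

-- x * (tan x)⁻¹ → 1
lemma tendsto_mul_inv_tan :
    Tendsto (fun t : ℝ => t * (Real.tan t)⁻¹) (nhdsWithin 0 {0}ᶜ) (nhds 1) := by
  have hc : Real.cos 0 ≠ 0 := by norm_num
  have h := (Real.hasDerivAt_tan hc)
  rw [hasDerivAt_iff_tendsto_slope] at h
  have h1 : (1 : ℝ) / Real.cos 0 ^ 2 = 1 := by norm_num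
  rw [h1] at h
  have h2 := h.inv₀ one_ne_zero
  rw [inv_one] at h2
  apply Tendsto.congr _ h2
  intro t
  simp only [slope_def_field, Real.tan_zero]
  rw [sub_zero, sub_zero, inv_div, div_eq_mul_inv]

noncomputable def Tm (k m : ℕ) : ℝ :=
  ∑' l : ℕ, if l < m then
    ((Real.pi / (2 * (2 * m + 1))) * (Real.tan ((2 * l + 1) * Real.pi / (2 * (2 * m + 1))))⁻¹) ^ k
  else 0

lemma y_pos {m l : ℕ} : 0 < (2 * l + 1) * Real.pi / (2 * (2 * m + 1)) := by positivity

lemma y_lt {m l : ℕ} (h : l < m) :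
    (2 * l + 1) * Real.pi / (2 * (2 * m + 1)) < Real.pi / 2 := by
  rw [div_lt_iff₀ (by positivity)]
  have h1 : (2 * (l : ℝ) + 1) < 2 * m + 1 := by
    have : (l : ℝ) < m := by exact_mod_cast h
    linarith
  have hpi := Real.pi_pos
  nlinarith

lemma inv_tan_le {x : ℝ} (h0 : 0 < x) (h1 : x < Real.pi / 2) :
    0 < (Real.tan x)⁻¹ ∧ (Real.tan x)⁻¹ ≤ x⁻¹ := by
  have ht : 0 < Real.tan x := Real.tan_pos_of_pos_of_lt_pi_div_two h0 h1
  have hlt : x < Real.tan x := Real.lt_tan h0 h1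
  constructor
  · positivity
  · exact inv_anti₀ h0 (le_of_lt hlt)

lemma Tm_tendsto {k : ℕ} (hk : 2 ≤ k) :
    Tendsto (fun m => Tm k m) atTop (nhds (∑' l : ℕ, 1 / ((2 * l + 1 : ℕ) : ℝ) ^ k)) := by
  apply tendsto_tsum_of_dominated_convergence (bound := fun l : ℕ => 1 / ((2 * l + 1 : ℕ) : ℝ) ^ k)
    (hodd_summable hk)
  · -- pointwise limits
    intro l
    have hy0 : Tendsto (fun m : ℕ => (2 * l + 1) * Real.pi / (2 * (2 * m + 1 : ℕ) : ℝ))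
        atTop (nhdsWithin 0 {0}ᶜ) := by
      apply tendsto_nhdsWithin_of_tendsto_nhds_of_eventually_within
      · have hb : Tendsto (fun m : ℕ => 1 / ((2 * m + 1 : ℕ) : ℝ)) atTop (nhds 0) := by
          have := (tendsto_one_div_atTop_nhds_zero_nat (𝕜 := ℝ)).comp
            (tendsto_atTop_mono (fun m : ℕ => by omega : ∀ m : ℕ, m ≤ 2 * m + 1) tendsto_id)
          exact this
        have h5 := hb.const_mul ((2 * l + 1) * Real.pi / 2)
        rw [mul_zero] at h5
        apply h5.congr
        intro m
        have hne : ((2 * m + 1 : ℕ) : ℝ) ≠ 0 := by positivity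
        field_simp
      · apply Eventually.of_forall
        intro m
        have : (0 : ℝ) < (2 * l + 1) * Real.pi / (2 * (2 * m + 1 : ℕ) : ℝ) := by positivity
        simp only [Set.mem_compl_iff, Set.mem_singleton_iff]
        positivity
    have hyt := tendsto_mul_inv_tan.comp hy0
    have hfinal := (hyt.const_mul ((1 : ℝ) / (2 * l + 1 : ℕ))).pow k
    rw [mul_one] at hfinal
    have hval : ((1 : ℝ) / ((2 * l + 1 : ℕ) : ℝ)) ^ k = 1 / ((2 * l + 1 : ℕ) : ℝ) ^ k := by
      rw [div_pow, one_pow]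
    rw [hval] at hfinal
    apply Tendsto.congr' _ hfinal
    filter_upwards [eventually_ge_atTop (l + 1)] with m hm
    have hlm : l < m := by omega
    rw [if_pos hlm]
    have hyne : Real.pi / (2 * (2 * (m : ℝ) + 1)) =
        ((2 * l + 1) * Real.pi / (2 * (2 * (m : ℝ) + 1))) / (2 * l + 1) := by
      field_simp
    push_cast
    simp only [Function.comp_apply]
    congr 1
    rw [hyne]
    ring
  · -- bound
    apply Eventually.of_forall
    intro m l
    by_cases h : l < m
    · rw [if_pos h]
      set y : ℝ := (2 * l + 1) * Real.pi / (2 * (2 * m + 1)) with hy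
      have h0 : 0 < y := y_pos
      have h1 : y < Real.pi / 2 := y_lt h
      obtain ⟨hp, hle⟩ := inv_tan_le h0 h1
      have hbase0 : 0 ≤ Real.pi / (2 * (2 * (m : ℕ) + 1 : ℝ)) * (Real.tan y)⁻¹ := by positivity
      rw [Real.norm_eq_abs, abs_pow, abs_of_nonneg hbase0,
        show (1:ℝ) / ((2 * l + 1 : ℕ) : ℝ) ^ k = (((2 * l + 1 : ℕ) : ℝ)⁻¹) ^ k by
          rw [inv_pow, one_div]]
      apply pow_le_pow_left₀ hbase0
      calc Real.pi / (2 * (2 * (m : ℕ) + 1 : ℝ)) * (Real.tan y)⁻¹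
          ≤ Real.pi / (2 * (2 * (m : ℕ) + 1 : ℝ)) * y⁻¹ := by
            apply mul_le_mul_of_nonneg_left hle (by positivity)
        _ = (((2 * l + 1 : ℕ) : ℝ))⁻¹ := by
            rw [hy]
            push_cast
            rw [inv_div]
            field_simp
    · rw [if_neg h]
      simp only [norm_zero]
      positivity

lemma sum_tan_eq {k : ℕ} (hk : 2 ≤ k) (hke : Even k) {m : ℕ} (hm : 1 ≤ m) :
    ∑ j ∈ Finset.range (2 * m + 1), Real.tan (Real.pi * j / (2 * m + 1)) ^ k =
      2 * (2 * ((2 * m : ℝ) + 1) / Real.pi) ^ k * Tm k m := by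
  set t : ℕ → ℝ := fun j => Real.tan (Real.pi * j / (2 * m + 1)) ^ k with ht
  have hMne : ((2 * m : ℝ) + 1) ≠ 0 := by positivity
  -- symmetry: j from the upper half maps to lower half
  have hsym : ∀ i, i < m → t (m + 1 + i) = t (m - i) := by
    intro i hi
    have hcast : ((m - i : ℕ) : ℝ) = (m : ℝ) - i := by
      rw [Nat.cast_sub (le_of_lt hi)]
    rw [ht]
    simp only
    have harg : Real.pi * (m + 1 + i : ℕ) / (2 * m + 1) =
        Real.pi - Real.pi * ((m - i : ℕ) : ℝ) / (2 * m + 1) := by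
      rw [hcast]
      push_cast
      field_simp
      ring
    rw [harg, Real.tan_pi_sub, hke.neg_pow]
  -- lower half equals inverse-tan terms
  have hlow : ∀ i, i < m →
      t (m - i) = ((Real.tan ((2 * i + 1) * Real.pi / (2 * (2 * m + 1))))⁻¹) ^ k := by
    intro i hi
    have hcast : ((m - i : ℕ) : ℝ) = (m : ℝ) - i := by
      rw [Nat.cast_sub (le_of_lt hi)]
    have harg : Real.pi * ((m - i : ℕ) : ℝ) / (2 * m + 1) =
        Real.pi / 2 - (2 * i + 1) * Real.pi / (2 * (2 * m + 1)) := by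
      rw [hcast]
      field_simp
      ring
    rw [ht]
    simp only
    rw [harg, Real.tan_pi_div_two_sub]
  -- split the sum
  have hsplit : ∑ j ∈ Finset.range (2 * m + 1), t j =
      ∑ j ∈ Finset.range (m + 1), t j + ∑ i ∈ Finset.range m, t (m + 1 + i) := by
    rw [show 2 * m + 1 = (m + 1) + m by omega, Finset.sum_range_add]
  have ht0 : t 0 = 0 := by
    rw [ht]
    simp only [Nat.cast_zero, mul_zero, zero_div, Real.tan_zero]
    exact zero_pow (by omega)
  have hfirst : ∑ j ∈ Finset.range (m + 1), t j = ∑ i ∈ Finset.range m, t (i + 1) := by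
    rw [Finset.sum_range_succ', ht0, add_zero]
  have hreflect : ∑ i ∈ Finset.range m, t (i + 1) = ∑ i ∈ Finset.range m, t (m - i) := by
    rw [← Finset.sum_range_reflect (fun i => t (i + 1)) m]
    apply Finset.sum_congr rfl
    intro i hi
    simp only [Finset.mem_range] at hi
    congr 1
    omega
  have hsym_sum : ∑ i ∈ Finset.range m, t (m + 1 + i) = ∑ i ∈ Finset.range m, t (m - i) := by
    apply Finset.sum_congr rfl
    intro i hi
    exact hsym i (Finset.mem_range.mp hi)
  rw [hsplit, hfirst, hreflect, hsym_sum, ← two_mul]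
  -- now express via Tm
  have hTm : Tm k m = ∑ i ∈ Finset.range m,
      ((Real.pi / (2 * (2 * m + 1))) *
        (Real.tan ((2 * i + 1) * Real.pi / (2 * (2 * m + 1))))⁻¹) ^ k := by
    rw [Tm]
    refine (tsum_eq_sum (s := Finset.range m) ?_).trans (Finset.sum_congr rfl ?_)
    · intro b hb
      rw [if_neg (fun h => hb (Finset.mem_range.mpr h))]
    · intro i hi
      rw [if_pos (Finset.mem_range.mp hi)]
  rw [hTm, Finset.mul_sum, Finset.mul_sum]
  apply Finset.sum_congr rfl
  intro i hi
  rw [hlow i (Finset.mem_range.mp hi)]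
  have hcd : (2 * (2 * (m : ℝ) + 1) / Real.pi) * (Real.pi / (2 * (2 * (m : ℝ) + 1))) = 1 := by
    field_simp
  have hkey : (2 * (2 * (m : ℝ) + 1) / Real.pi) *
      (Real.pi / (2 * (2 * (m : ℝ) + 1)) *
        (Real.tan ((2 * i + 1) * Real.pi / (2 * (2 * m + 1))))⁻¹) =
      (Real.tan ((2 * i + 1) * Real.pi / (2 * (2 * m + 1))))⁻¹ := by
    rw [← mul_assoc, hcd, one_mul]
  rw [mul_assoc, ← mul_pow, hkey]

theorem S_asymp_in_m (k : ℕ) (hk : 2 ≤ k) (hke : Even k) :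
    Filter.Tendsto
      (fun m : ℕ => (S m ((2 * m) ^ k) : ℝ) /
        ((2 ^ k * (2 ^ k - 1) / Real.pi ^ k) * (∑' n : ℕ+, (1 : ℝ) / (n : ℝ) ^ k) *
          (m : ℝ) ^ (k - 1)))
      Filter.atTop (nhds 1) := by
  obtain ⟨K, hK⟩ : ∃ K, k = K + 1 := ⟨k - 1, by omega⟩
  set ζ : ℝ := ∑' n : ℕ, 1 / (n : ℝ) ^ k with hζ
  have hζpos : 0 < ζ := zeta_pos hk
  have hζne : ζ ≠ 0 := ne_of_gt hζpos
  have h2k1 : (1 : ℝ) < 2 ^ k := by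
    apply one_lt_pow₀ (by norm_num : (1:ℝ) < 2) (by omega)
  have h2kne : (2 : ℝ) ^ k - 1 ≠ 0 := by linarith
  have hπ : Real.pi ≠ 0 := Real.pi_ne_zero
  set g : ℕ → ℝ := fun m =>
    (2 / ((2 ^ k - 1) * ζ)) * ((2 * (m : ℝ) + 1) / m) ^ (k - 1) * Tm k m with hg
  -- the limit of g
  have hquot : Tendsto (fun m : ℕ => (2 * (m : ℝ) + 1) / m) atTop (nhds 2) := by
    have hb : Tendsto (fun m : ℕ => 2 + 1 / (m : ℝ)) atTop (nhds 2) := by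
      have hb2 := tendsto_one_div_atTop_nhds_zero_nat.const_add (2 : ℝ)
      simpa using hb2
    apply Tendsto.congr' _ hb
    filter_upwards [eventually_ge_atTop 1] with m hm
    have hmne : (m : ℝ) ≠ 0 := by
      have : (1 : ℝ) ≤ m := by exact_mod_cast hm
      linarith
    field_simp
  have hpow : Tendsto (fun m : ℕ => ((2 * (m : ℝ) + 1) / m) ^ (k - 1)) atTop
      (nhds (2 ^ (k - 1))) := hquot.pow (k - 1)
  have hT : Tendsto (fun m => Tm k m) atTop (nhds ((1 - (1 / 2) ^ k) * ζ)) := by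
    rw [← odd_sum_eq hk]
    exact Tm_tendsto hk
  have hgl : Tendsto g atTop
      (nhds ((2 / ((2 ^ k - 1) * ζ)) * 2 ^ (k - 1) * ((1 - (1 / 2) ^ k) * ζ))) :=
    ((tendsto_const_nhds.mul hpow).mul hT)
  have hval : (2 / ((2 ^ k - 1) * ζ)) * (2 : ℝ) ^ (k - 1) * ((1 - (1 / 2) ^ k) * ζ) = 1 := by
    have hhalf : (2 : ℝ) ^ k * (1 / 2) ^ k = 1 := by
      rw [← mul_pow]
      norm_num
    have hk1 : k - 1 = K := by omega
    rw [hk1]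
    rw [hK] at h2kne ⊢
    rw [show ((1:ℝ)/2) ^ (K+1) = ((2:ℝ)^(K+1))⁻¹ by rw [one_div, inv_pow]]
    have h2K : ((2:ℝ))^(K+1) ≠ 0 := by positivity
    field_simp [h2kne]
    ring
  rw [hval] at hgl
  -- eventual equality
  apply Tendsto.congr' _ hgl
  filter_upwards [eventually_ge_atTop 1] with m hm
  have hmne : (m : ℝ) ≠ 0 := by
    have : (1 : ℝ) ≤ m := by exact_mod_cast hm
    linarith
  have hMne : (2 * (m : ℝ) + 1) ≠ 0 := by positivity
  have hid := (main_identity k m hk hke hm).trans (sum_tan_eq hk hke hm)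
  push_cast at hid
  have hS : ((S m ((2 * m) ^ k) : ℤ) : ℝ) =
      2 * (2 * ((2 * m : ℝ) + 1) / Real.pi) ^ k * Tm k m / (2 * (m : ℝ) + 1) := by
    rw [eq_div_iff hMne]
    linarith [hid]
  have hπk : Real.pi ^ k ≠ 0 := pow_ne_zero _ hπ
  have hD : (2 ^ k * (2 ^ k - 1) / Real.pi ^ k) * ζ * (m : ℝ) ^ (k - 1) ≠ 0 := by
    apply mul_ne_zero (mul_ne_zero _ hζne) (pow_ne_zero _ hmne)
    exact div_ne_zero (mul_ne_zero (by positivity) h2kne) hπk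
  rw [hg]
  simp only
  rw [zeta_pnat_eq hk, ← hζ]
  rw [eq_div_iff hD, hS]
  have hk1 : k - 1 = K := by omega
  rw [hk1]
  rw [hK] at h2kne ⊢
  simp only [div_pow, mul_pow]
  field_simp [h2kne]
  ring
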